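/- For real numbers g and f, there exists σ ≥ 0 with g + σ ≥ 0 and σ·f = 0 if and only if the implication (g < 0 → f = 0) holds. -/
import Mathlib

theorem stmt_1 (g f : ℝ) :
    (∃ σ : ℝ, σ ≥ 0 ∧ g + σ ≥ 0 ∧ σ * f = 0) ↔ (g < 0 → f = 0) := by
  constructor
  · rintro ⟨σ, hσ, hg, hf⟩ hglt
    rcases mul_eq_zero.1 hf with h | h
    · linarith
    · exact h
  · intro h
    by_cases hg : g < 0
    · exact ⟨-g, by linarith, by linarith, by simp [h hg]⟩
    · exact ⟨0, le_refl 0, by linarith, by simp⟩
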